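/- The supra-SIM property is translation invariant: if A ⊆ ℕ is supra-SIM and i ∈ ℕ, then A + i and (A − i) ∩ ℕ are supra-SIM. -/

import Mathlib

open Filter Set MeasureTheory

/-- The hypernatural numbers: the ultrapower of `ℕ` by the hyperfilter. -/
abbrev SN : Type := Filter.Germ (Filter.hyperfilter ℕ : Filter ℕ) ℕ

/-- Membership of a hypernatural in the internal set determined by a sequence of sets. -/
def memF (F : ℕ → Set ℕ) (x : SN) : Prop :=
  x.liftOn (fun f => ∀ᶠ i in (Filter.hyperfilter ℕ : Filter ℕ), f i ∈ F i)
    (by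
      intro f g h
      exact propext (eventually_congr (h.mono fun i hi => by rw [hi])))

/-- A set of hypernaturals is internal if it is determined by a sequence of subsets of `ℕ`. -/
def InternalSet (A : Set SN) : Prop := ∃ F : ℕ → Set ℕ, A = {x | memF F x}

/-- The nonstandard extension `*A ⊆ *ℕ` of a set `A ⊆ ℕ`. -/
def starN (A : Set ℕ) : Set SN := {x | memF (fun _ => A) x}

/-- The canonical map from the hypernaturals to the hyperreals. -/
noncomputable def toR (x : SN) : Hyperreal := Filter.Germ.map (fun n : ℕ => (n : ℝ)) x

/-- `[y,z]` is an infinite (hyperfinite) interval. -/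
def InfInterval (y z : SN) : Prop := ∀ n : ℕ, y + (n : SN) < z

/-- The map `st_I : I → [0,1]`, `st_I(a) = st((a-y)/(z-y))`. -/
noncomputable def stI (y z : SN) (x : SN) : ℝ :=
  Hyperreal.st ((toR x - toR y) / (toR z - toR y))

/-- `λ_I(A)`: Lebesgue measure of the standard part image of `A ∩ I`, `I = [y,z]`. -/
noncomputable def lam (A : Set SN) (y z : SN) : ℝ :=
  (volume (stI y z '' (A ∩ Set.Icc y z))).toReal

/-- `g_A(I)`: the normalized length of the largest gap of `A` on `I = [y,z]`. -/
noncomputable def gap (A : Set SN) (y z : SN) : ℝ :=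
  sSup {r : ℝ | 0 ≤ r ∧ ∃ c d : SN, c ∈ Set.Icc y z ∧ d ∈ Set.Icc y z ∧ c ≤ d ∧
    Set.Icc c d ∩ A = ∅ ∧ (r : Hyperreal) ≤ (toR d - toR c) / (toR z - toR y)}

/-- `A` has the interval-measure (IM) property on `I = [y,z]`. -/
def IMOn (A : Set SN) (y z : SN) : Prop :=
  ∀ ε : ℝ, 0 < ε → ∃ δ : ℝ, 0 < δ ∧ ∀ c d : SN, y ≤ c → c ≤ d → d ≤ z →
    InfInterval c d → gap A c d ≤ δ → 1 - ε ≤ lam A c d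

/-- `A` has the enhanced IM property on `I = [y,z]`. -/
def EnhancedIMOn (A : Set SN) (y z : SN) : Prop := IMOn A y z ∧ 0 < lam A y z

/-- `A ⊆ ℕ` has the standard interval-measure (SIM) property. -/
def SIM (A : Set ℕ) : Prop :=
  (∀ y z : SN, InfInterval y z → IMOn (starN A) y z) ∧
  ∃ y z : SN, InfInterval y z ∧ EnhancedIMOn (starN A) y z

/-- `A ⊆ ℕ` is supra-SIM if it contains a SIM set. -/
def SupraSIM (A : Set ℕ) : Prop := ∃ B ⊆ A, SIM B

-- ==================== auxiliary lemmas ====================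
section Aux
variable {k : ℕ}

lemma sn_natCast (n : ℕ) : (n : SN) = ((fun _ => n : ℕ → ℕ) : SN) := rfl

lemma sn_sub_le (x : SN) : x - (k : SN) ≤ x := by
  induction x using Filter.Germ.inductionOn with
  | h f => exact Filter.Germ.coe_le.2 (Eventually.of_forall fun n => Nat.sub_le _ _)

lemma sn_add_sub (x : SN) : x + (k : SN) - (k : SN) = x := by
  induction x using Filter.Germ.inductionOn with
  | h f =>
    show ((fun n => f n + k - k : ℕ → ℕ) : SN) = ↑f
    exact congrArg _ (funext fun n => by omega)

lemma sn_sub_add {x : SN} (h : (k : SN) ≤ x) : x - (k : SN) + (k : SN) = x := by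
  induction x using Filter.Germ.inductionOn with
  | h f =>
    refine Filter.Germ.coe_eq.2 ?_
    exact (Filter.Germ.coe_le.1 h).mono fun n hn => Nat.sub_add_cancel hn

lemma sn_sub_le_sub {x y : SN} (h : x ≤ y) : x - (k : SN) ≤ y - (k : SN) := by
  induction x using Filter.Germ.inductionOn with
  | h f =>
    induction y using Filter.Germ.inductionOn with
    | h g =>
      refine Filter.Germ.coe_le.2 ?_
      exact (Filter.Germ.coe_le.1 h).mono fun n hn => Nat.sub_le_sub_right hn k

lemma toR_add (x y : SN) : toR (x + y) = toR x + toR y := by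
  induction x using Filter.Germ.inductionOn with
  | h f =>
    induction y using Filter.Germ.inductionOn with
    | h g =>
      show Hyperreal.ofSeq (fun n => ((f n + g n : ℕ) : ℝ)) =
        Hyperreal.ofSeq (fun n => ((f n : ℕ) : ℝ)) + Hyperreal.ofSeq (fun n => ((g n : ℕ) : ℝ))
      unfold Hyperreal.ofSeq
      show ((fun n => ((f n + g n : ℕ) : ℝ) : ℕ → ℝ) : Filter.Germ (Filter.hyperfilter ℕ : Filter ℕ) ℝ) =
        (((fun n => ((f n : ℕ) : ℝ)) + (fun n => ((g n : ℕ) : ℝ)) : ℕ → ℝ) : Filter.Germ (Filter.hyperfilter ℕ : Filter ℕ) ℝ)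
      exact congrArg _ (funext fun n => by push_cast; rfl)

lemma toR_natCast (n : ℕ) : toR (n : SN) = ((n : ℝ) : Hyperreal) := rfl

lemma toR_le {x y : SN} (h : x ≤ y) : toR x ≤ toR y := by
  induction x using Filter.Germ.inductionOn with
  | h f =>
    induction y using Filter.Germ.inductionOn with
    | h g =>
      refine Filter.Germ.coe_le.2 ?_
      exact (Filter.Germ.coe_le.1 h).mono fun n hn => Nat.cast_le.2 hn

lemma toR_infinite {y z : SN} (h : InfInterval y z) :
    Hyperreal.InfinitePos (toR z - toR y) := by
  intro r
  obtain ⟨n, hn⟩ := exists_nat_gt r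
  have h1 : toR y + ((n : ℝ) : Hyperreal) ≤ toR z := by
    have := toR_le (le_of_lt (h n))
    rwa [toR_add, toR_natCast] at this
  have h2 : ((r : ℝ) : Hyperreal) < ((n : ℝ) : Hyperreal) := Hyperreal.coe_lt_coe.2 hn
  linarith

end Aux

section Hyp
open Hyperreal

lemma not_infinite_of_unit {a : ℝ*} (h0 : 0 ≤ a) (h1 : a ≤ 1) : ¬ Hyperreal.Infinite a :=
  Hyperreal.not_infinite_iff_exist_lt_gt.2 ⟨-1, 2, by
    constructor
    · calc ((-1 : ℝ) : ℝ*) < ((0:ℝ) : ℝ*) := Hyperreal.coe_lt_coe.2 (by norm_num)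
        _ = 0 := Hyperreal.coe_zero
        _ ≤ a := h0
    · calc a ≤ 1 := h1
        _ = ((1:ℝ) : ℝ*) := Hyperreal.coe_one.symm
        _ < ((2:ℝ) : ℝ*) := Hyperreal.coe_lt_coe.2 (by norm_num)⟩

lemma st_eq_of_unit {a b : ℝ*} (ha0 : 0 ≤ a) (ha1 : a ≤ 1) (hb0 : 0 ≤ b) (hb1 : b ≤ 1)
    (h : Hyperreal.Infinitesimal (a - b)) : Hyperreal.st a = Hyperreal.st b := by
  have hna := not_infinite_of_unit ha0 ha1
  have hnb := not_infinite_of_unit hb0 hb1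
  have h1 : Hyperreal.st (a - b) = 0 := Hyperreal.IsSt.st_eq h
  have h2 : Hyperreal.st (a - b) = Hyperreal.st a - Hyperreal.st b := by
    rw [sub_eq_add_neg, Hyperreal.st_add hna (Hyperreal.not_infinite_neg hnb), Hyperreal.st_neg,
      sub_eq_add_neg]
  linarith

lemma infinitesimal_squeeze {x y : ℝ*} (h0 : 0 ≤ x) (hxy : x ≤ y)
    (hy : Hyperreal.Infinitesimal y) : Hyperreal.Infinitesimal x := by
  rw [Hyperreal.infinitesimal_def] at hy ⊢
  intro r hr
  refine ⟨lt_of_lt_of_le ?_ h0, lt_of_le_of_lt hxy (hy r hr).2⟩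
  calc (-(r:ℝ*)) = ((-r : ℝ) : ℝ*) := (Hyperreal.coe_neg r).symm
    _ < ((0:ℝ) : ℝ*) := Hyperreal.coe_lt_coe.2 (by linarith)
    _ = 0 := Hyperreal.coe_zero

lemma infinitesimal_coe_mul (r : ℝ) {x : ℝ*} (h : Hyperreal.Infinitesimal x) :
    Hyperreal.Infinitesimal ((r : ℝ*) * x) := by
  have := (Hyperreal.isSt_refl_real r).mul h
  simpa [Hyperreal.Infinitesimal] using this

lemma infinitesimal_coe_div {D : ℝ*} (r : ℝ) (hD : Hyperreal.InfinitePos D) :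
    Hyperreal.Infinitesimal ((r : ℝ*) / D) := by
  have h1 : Hyperreal.Infinitesimal D⁻¹ :=
    (Hyperreal.infinitePos_iff_infinitesimal_inv_pos.1 hD).1
  simpa [div_eq_mul_inv] using infinitesimal_coe_mul r h1

end Hyp

section Ratio
variable {y z x : SN}

lemma ratio_unit (hD : Hyperreal.InfinitePos (toR z - toR y)) (hx : x ∈ Set.Icc y z) :
    0 ≤ (toR x - toR y) / (toR z - toR y) ∧ (toR x - toR y) / (toR z - toR y) ≤ 1 := by
  have hDpos : 0 < toR z - toR y := hD.pos
  have h1 : 0 ≤ toR x - toR y := sub_nonneg.2 (toR_le hx.1)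
  have h2 : toR x - toR y ≤ toR z - toR y := by
    have := toR_le hx.2; linarith
  exact ⟨div_nonneg h1 (le_of_lt hDpos), (div_le_one hDpos).2 h2⟩

lemma stI_mem_unit (h : InfInterval y z) (hx : x ∈ Set.Icc y z) :
    stI y z x ∈ Set.Icc (0:ℝ) 1 := by
  have hD := toR_infinite h
  obtain ⟨h0, h1⟩ := ratio_unit hD hx
  have hni := not_infinite_of_unit h0 h1
  constructor
  · have := Hyperreal.st_le_of_le (Hyperreal.not_infinite_real 0) hni
      (by rw [Hyperreal.coe_zero]; exact h0)
    rwa [Hyperreal.st_id_real] at this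
  · have := Hyperreal.st_le_of_le hni (Hyperreal.not_infinite_real 1)
      (by rw [Hyperreal.coe_one]; exact h1)
    rwa [Hyperreal.st_id_real] at this

lemma im_subset_unit (S : Set SN) (h : InfInterval y z) :
    stI y z '' (S ∩ Set.Icc y z) ⊆ Set.Icc (0:ℝ) 1 := by
  rintro r ⟨x, ⟨-, hx⟩, rfl⟩
  exact stI_mem_unit h hx

lemma lam_nonneg (S : Set SN) (y z : SN) : 0 ≤ lam S y z := ENNReal.toReal_nonneg

lemma lam_le_of_im_subset {S₁ S₂ : Set SN} {y z y' z' : SN} (h₂ : InfInterval y' z')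
    (him : stI y z '' (S₁ ∩ Set.Icc y z) ⊆ stI y' z' '' (S₂ ∩ Set.Icc y' z') ∪ {0}) :
    lam S₁ y z ≤ lam S₂ y' z' := by
  unfold lam
  have hfin : volume (stI y' z' '' (S₂ ∩ Set.Icc y' z')) ≠ ⊤ := by
    refine ne_of_lt (lt_of_le_of_lt (measure_mono (im_subset_unit S₂ h₂)) ?_)
    rw [Real.volume_Icc]
    exact ENNReal.ofReal_lt_top
  refine ENNReal.toReal_mono hfin ?_
  calc volume (stI y z '' (S₁ ∩ Set.Icc y z))
      ≤ volume (stI y' z' '' (S₂ ∩ Set.Icc y' z') ∪ {0}) := measure_mono him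
    _ ≤ volume (stI y' z' '' (S₂ ∩ Set.Icc y' z')) + volume ({0} : Set ℝ) := measure_union_le _ _
    _ = volume (stI y' z' '' (S₂ ∩ Set.Icc y' z')) := by
        rw [Real.volume_singleton, add_zero]

end Ratio

section Gap

def gapSet (A : Set SN) (y z : SN) : Set ℝ :=
  {r : ℝ | 0 ≤ r ∧ ∃ c d : SN, c ∈ Set.Icc y z ∧ d ∈ Set.Icc y z ∧ c ≤ d ∧
    Set.Icc c d ∩ A = ∅ ∧ (r : Hyperreal) ≤ (toR d - toR c) / (toR z - toR y)}

lemma gap_eq (A : Set SN) (y z : SN) : gap A y z = sSup (gapSet A y z) := rfl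

lemma gap_nonneg (A : Set SN) (y z : SN) : 0 ≤ gap A y z :=
  Real.sSup_nonneg (fun _ hr => hr.1)

lemma gapSet_bddAbove {A : Set SN} {y z : SN} (h : InfInterval y z) :
    BddAbove (gapSet A y z) := by
  refine ⟨1, fun r hr => ?_⟩
  obtain ⟨hr0, c, d, hc, hd, hcd, -, hle⟩ := hr
  have hD := toR_infinite h
  have hnum : toR d - toR c ≤ toR z - toR y := by
    have := toR_le hd.2; have := toR_le hc.1; linarith
  have h1 : (r : ℝ*) ≤ 1 := hle.trans ((div_le_one hD.pos).2 hnum)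
  rw [← Hyperreal.coe_one, Hyperreal.coe_le_coe] at h1
  exact h1

end Gap

section Shift
variable {k : ℕ} {y z : SN}

lemma icc_shift {x : SN} :
    x ∈ Set.Icc (y + (k:SN)) (z + (k:SN)) ↔ ∃ x₀ ∈ Set.Icc y z, x₀ + (k:SN) = x := by
  constructor
  · rintro ⟨h1, h2⟩
    have hk : (k:SN) ≤ x := le_trans le_add_self h1
    refine ⟨x - (k:SN), ⟨?_, ?_⟩, sn_sub_add hk⟩
    · have := sn_sub_le_sub (k := k) h1
      rwa [sn_add_sub] at this
    · have := sn_sub_le_sub (k := k) h2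
      rwa [sn_add_sub] at this
  · rintro ⟨x₀, ⟨h1, h2⟩, rfl⟩
    exact ⟨add_le_add_left h1 _, add_le_add_left h2 _⟩

lemma mem_icc_shift {x : SN} :
    x + (k:SN) ∈ Set.Icc (y + (k:SN)) (z + (k:SN)) ↔ x ∈ Set.Icc y z := by
  simp only [Set.mem_Icc, add_le_add_iff_right]

lemma toR_shift_denom : toR (z + (k:SN)) - toR (y + (k:SN)) = toR z - toR y := by
  rw [toR_add, toR_add]; ring

lemma ratio_shift (c d : SN) :
    (toR (d + (k:SN)) - toR (c + (k:SN))) / (toR (z + (k:SN)) - toR (y + (k:SN)))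
      = (toR d - toR c) / (toR z - toR y) := by
  rw [toR_add, toR_add, toR_add, toR_add]
  congr 1 <;> ring

lemma stI_shift (x : SN) : stI (y + (k:SN)) (z + (k:SN)) (x + (k:SN)) = stI y z x := by
  unfold stI
  congr 1
  rw [toR_add, toR_add, toR_add]
  ring_nf

lemma lam_shift (S : Set SN) (y z : SN) (k : ℕ) :
    lam ((· + (k:SN)) '' S) (y + (k:SN)) (z + (k:SN)) = lam S y z := by
  unfold lam
  congr 1
  congr 1
  ext r
  constructor
  · rintro ⟨x, ⟨⟨s, hs, rfl⟩, hx⟩, rfl⟩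
    exact ⟨s, ⟨hs, mem_icc_shift.1 hx⟩, (stI_shift s).symm⟩
  · rintro ⟨x, ⟨hxS, hx⟩, rfl⟩
    exact ⟨x + (k:SN), ⟨⟨x, hxS, rfl⟩, mem_icc_shift.2 hx⟩, stI_shift x⟩

lemma gap_shift (S : Set SN) (y z : SN) (k : ℕ) :
    gap ((· + (k:SN)) '' S) (y + (k:SN)) (z + (k:SN)) = gap S y z := by
  rw [gap_eq, gap_eq]
  congr 1
  ext r
  constructor
  · rintro ⟨hr0, c, d, hc, hd, hcd, hemp, hle⟩
    obtain ⟨c₀, hc₀, rfl⟩ := icc_shift.1 hc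
    obtain ⟨d₀, hd₀, rfl⟩ := icc_shift.1 hd
    refine ⟨hr0, c₀, d₀, hc₀, hd₀, (add_le_add_iff_right _).1 hcd, ?_, ?_⟩
    · ext x
      simp only [Set.mem_inter_iff, Set.mem_empty_iff_false, iff_false, not_and]
      intro hx hxS
      have : x + (k:SN) ∈ Set.Icc (c₀ + (k:SN)) (d₀ + (k:SN)) ∩ ((· + (k:SN)) '' S) :=
        ⟨⟨add_le_add_left hx.1 _, add_le_add_left hx.2 _⟩, ⟨x, hxS, rfl⟩⟩
      rw [hemp] at this
      exact this
    · rwa [ratio_shift] at hle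
  · rintro ⟨hr0, c, d, hc, hd, hcd, hemp, hle⟩
    refine ⟨hr0, c + (k:SN), d + (k:SN), mem_icc_shift.2 hc, mem_icc_shift.2 hd,
      add_le_add_left hcd _, ?_, ?_⟩
    · ext x
      simp only [Set.mem_inter_iff, Set.mem_empty_iff_false, iff_false, not_and]
      rintro hx ⟨s, hsS, rfl⟩
      have hs : s ∈ Set.Icc c d :=
        ⟨(add_le_add_iff_right _).1 hx.1, (add_le_add_iff_right _).1 hx.2⟩
      have : s ∈ Set.Icc c d ∩ S := ⟨hs, hsS⟩
      rw [hemp] at this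
      exact this
    · rwa [ratio_shift (k := k) (y := y) (z := z) c d]

lemma inf_shift (h : InfInterval y z) : InfInterval (y + (k:SN)) (z + (k:SN)) := by
  intro n
  have := add_lt_add_left (h n) (k:SN)
  calc y + (k:SN) + (n:SN) = y + (n:SN) + (k:SN) := by ring
    _ < z + (k:SN) := this

end Shift

section Congr
variable {S₁ S₂ : Set SN} {y z : SN}

lemma lam_congr (h : ∀ x ∈ Set.Icc y z, x ∈ S₁ ↔ x ∈ S₂) : lam S₁ y z = lam S₂ y z := by
  unfold lam
  have : S₁ ∩ Set.Icc y z = S₂ ∩ Set.Icc y z := by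
    ext x
    exact ⟨fun ⟨h1, h2⟩ => ⟨(h x h2).1 h1, h2⟩, fun ⟨h1, h2⟩ => ⟨(h x h2).2 h1, h2⟩⟩
  rw [this]

lemma gap_congr (h : ∀ x ∈ Set.Icc y z, x ∈ S₁ ↔ x ∈ S₂) : gap S₁ y z = gap S₂ y z := by
  rw [gap_eq, gap_eq]
  congr 1
  ext r
  have key : ∀ c d : SN, c ∈ Set.Icc y z → d ∈ Set.Icc y z →
      (Set.Icc c d ∩ S₁ = ∅ ↔ Set.Icc c d ∩ S₂ = ∅) := by
    intro c d hc hd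
    have hsub : Set.Icc c d ⊆ Set.Icc y z := fun x hx =>
      ⟨le_trans hc.1 hx.1, le_trans hx.2 hd.2⟩
    have : Set.Icc c d ∩ S₁ = Set.Icc c d ∩ S₂ := by
      ext x
      exact ⟨fun ⟨h1, h2⟩ => ⟨h1, (h x (hsub h1)).1 h2⟩,
        fun ⟨h1, h2⟩ => ⟨h1, (h x (hsub h1)).2 h2⟩⟩
    rw [this]
  constructor
  · rintro ⟨hr0, c, d, hc, hd, hcd, hemp, hle⟩
    exact ⟨hr0, c, d, hc, hd, hcd, (key c d hc hd).1 hemp, hle⟩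
  · rintro ⟨hr0, c, d, hc, hd, hcd, hemp, hle⟩
    exact ⟨hr0, c, d, hc, hd, hcd, (key c d hc hd).2 hemp, hle⟩

end Congr

section Boundary
variable {k : ℕ} {y y' z : SN}

/-- On `[y',z]` with `y ≤ y' ≤ y + k`, the two standard-part maps agree. -/
lemma stI_boundary (hyz : InfInterval y z) (h1 : y ≤ y') (h2 : y' ≤ y + (k:SN))
    {x : SN} (hx : x ∈ Set.Icc y' z) : stI y z x = stI y' z x := by
  have hD : Hyperreal.InfinitePos (toR z - toR y) := toR_infinite hyz
  have hu0 : (0:ℝ*) ≤ toR y' - toR y := sub_nonneg.2 (toR_le h1)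
  have hum : toR y' - toR y ≤ ((k:ℝ) : ℝ*) := by
    have := toR_le h2
    rw [toR_add, toR_natCast] at this
    linarith
  have hD' : Hyperreal.InfinitePos (toR z - toR y') := by
    intro r
    have := hD (r + k)
    have hc : ((r + (k:ℝ) : ℝ) : ℝ*) = (r : ℝ*) + ((k:ℝ) : ℝ*) := by push_cast; ring
    rw [hc] at this
    linarith
  have hxy : x ∈ Set.Icc y z := ⟨le_trans h1 hx.1, hx.2⟩
  obtain ⟨hq0, hq1⟩ := ratio_unit hD hxy
  obtain ⟨hq'0, hq'1⟩ := ratio_unit hD' hx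
  unfold stI
  refine st_eq_of_unit hq0 hq1 hq'0 hq'1 ?_
  set D : ℝ* := toR z - toR y with hDdef
  set D' : ℝ* := toR z - toR y' with hD'def
  set u : ℝ* := toR y' - toR y with hudef
  set p : ℝ* := toR x - toR y with hpdef
  set p' : ℝ* := toR x - toR y' with hp'def
  have hDpos : 0 < D := hD.pos
  have hD'pos : 0 < D' := hD'.pos
  have hp'0 : 0 ≤ p' := sub_nonneg.2 (toR_le hx.1)
  have hp'D' : p' ≤ D' := by
    have := toR_le hx.2
    simp only [hp'def, hD'def]
    linarith
  have key : p / D - p' / D' = u * (D' - p') / (D * D') := by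
    have e1 : p = p' + u := by simp only [hpdef, hp'def, hudef]; ring
    have e2 : D = D' + u := by simp only [hDdef, hD'def, hudef]; ring
    rw [e1, e2]
    field_simp
    ring
  rw [key]
  refine infinitesimal_squeeze ?_ ?_ (infinitesimal_coe_div (k:ℝ) hD)
  · exact div_nonneg (mul_nonneg hu0 (by linarith)) (le_of_lt (mul_pos hDpos hD'pos))
  · rw [div_le_div_iff₀ (by positivity) hDpos]
    have h3 : u * (D' - p') ≤ u * D' := by nlinarith
    calc u * (D' - p') * D ≤ u * D' * D := mul_le_mul_of_nonneg_right h3 hDpos.le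
      _ = u * (D' * D) := by ring
      _ ≤ ((k:ℝ):ℝ*) * (D' * D) := mul_le_mul_of_nonneg_right hum (by positivity)
      _ = ((k:ℝ):ℝ*) * (D * D') := by ring

/-- Below `y'` the standard part map is zero. -/
lemma stI_boundary_zero (hyz : InfInterval y z) (h2 : y' ≤ y + (k:SN))
    {x : SN} (hx : x ∈ Set.Icc y z) (hxy' : x ≤ y') : stI y z x = 0 := by
  have hD : Hyperreal.InfinitePos (toR z - toR y) := toR_infinite hyz
  obtain ⟨hq0, hq1⟩ := ratio_unit hD hx
  have hnum : toR x - toR y ≤ ((k:ℝ):ℝ*) := by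
    have h3 := toR_le (le_trans hxy' h2)
    rw [toR_add, toR_natCast] at h3
    linarith
  have hsmall : Hyperreal.Infinitesimal ((toR x - toR y) / (toR z - toR y)) := by
    have hDp := hD.pos
    refine infinitesimal_squeeze hq0 ?_ (infinitesimal_coe_div (k:ℝ) hD)
    gcongr
  exact Hyperreal.IsSt.st_eq hsmall

end Boundary

section Boundary2
variable {k : ℕ} {y y' z : SN} {S : Set SN}

lemma lam_le_boundary (hyz : InfInterval y z) (h1 : y ≤ y') (h2 : y' ≤ y + (k:SN))
    (h3 : y' ≤ z) (hy'z : InfInterval y' z) : lam S y z ≤ lam S y' z := by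
  refine lam_le_of_im_subset hy'z ?_
  rintro r ⟨x, ⟨hxS, hxI⟩, rfl⟩
  by_cases hc : y' ≤ x
  · exact Or.inl ⟨x, ⟨hxS, ⟨hc, hxI.2⟩⟩, (stI_boundary hyz h1 h2 ⟨hc, hxI.2⟩).symm⟩
  · right
    have : stI y z x = 0 := stI_boundary_zero hyz h2 hxI (le_of_not_ge hc)
    simp [this]

lemma lam_eq_boundary (hyz : InfInterval y z) (h1 : y ≤ y') (h2 : y' ≤ y + (k:SN))
    (hsub : ∀ x ∈ S, y' ≤ x) : lam S y z = lam S y' z := by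
  unfold lam
  have hset : S ∩ Set.Icc y z = S ∩ Set.Icc y' z := by
    ext x
    exact ⟨fun ⟨hS, hI⟩ => ⟨hS, ⟨hsub x hS, hI.2⟩⟩,
      fun ⟨hS, hI⟩ => ⟨hS, ⟨le_trans h1 hI.1, hI.2⟩⟩⟩
  rw [hset, Set.image_congr (fun x hx => stI_boundary hyz h1 h2 hx.2)]

lemma gap_le_boundary (hyz : InfInterval y z) (h1 : y ≤ y') (h2 : y' ≤ y + (k:SN))
    (h3 : y' ≤ z) : gap S y' z ≤ 2 * gap S y z := by
  have hD : Hyperreal.InfinitePos (toR z - toR y) := toR_infinite hyz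
  have hD' : Hyperreal.InfinitePos (toR z - toR y') := by
    intro r
    have := hD (r + k)
    have hc : ((r + (k:ℝ) : ℝ) : ℝ*) = (r : ℝ*) + ((k:ℝ) : ℝ*) := by push_cast; ring
    rw [hc] at this
    have h4 := toR_le h2
    rw [toR_add, toR_natCast] at h4
    linarith
  rw [gap_eq S y' z]
  refine Real.sSup_le (fun r hr => ?_) (by linarith [gap_nonneg S y z])
  obtain ⟨hr0, c, d, hc, hd, hcd, hemp, hle⟩ := hr
  have hmem : r / 2 ∈ gapSet S y z := by
    refine ⟨by linarith, c, d, ⟨le_trans h1 hc.1, hc.2⟩, ⟨le_trans h1 hd.1, hd.2⟩, hcd, hemp, ?_⟩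
    have hnum : (0:ℝ*) ≤ toR d - toR c := sub_nonneg.2 (toR_le hcd)
    have hDD' : toR z - toR y ≤ 2 * (toR z - toR y') := by
      have h4 := toR_le h2
      rw [toR_add, toR_natCast] at h4
      have h5 := hD' k
      linarith
    have step : (toR d - toR c) / (2 * (toR z - toR y')) ≤ (toR d - toR c) / (toR z - toR y) := by
      gcongr
      exact hD.pos
    have step2 : ((r/2 : ℝ) : ℝ*) = (r : ℝ*) / 2 := by push_cast; ring
    rw [step2]
    calc (r : ℝ*) / 2 ≤ ((toR d - toR c) / (toR z - toR y')) / 2 := by linarith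
      _ = (toR d - toR c) / (2 * (toR z - toR y')) := by rw [div_div, mul_comm]
      _ ≤ (toR d - toR c) / (toR z - toR y) := step
  have := le_csSup (gapSet_bddAbove hyz) hmem
  rw [← gap_eq] at this
  linarith

end Boundary2

section StarN
variable {k : ℕ}

lemma memF_coe (F : ℕ → Set ℕ) (f : ℕ → ℕ) :
    memF F ↑f ↔ ∀ᶠ n in (Filter.hyperfilter ℕ : Filter ℕ), f n ∈ F n := Iff.rfl

lemma starN_image (B : Set ℕ) (k : ℕ) :
    starN ((· + k) '' B) = (· + (k:SN)) '' starN B := by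
  have dir : ∀ x ∈ starN B, x + (k:SN) ∈ starN ((· + k) '' B) := by
    intro x hx
    induction x using Filter.Germ.inductionOn with
    | h f =>
      have hf : ∀ᶠ n in (Filter.hyperfilter ℕ : Filter ℕ), f n ∈ B := hx
      show memF _ (↑(fun n => f n + k))
      exact (memF_coe _ _).2 (hf.mono fun n hn => ⟨f n, hn, rfl⟩)
  ext x
  induction x using Filter.Germ.inductionOn with
  | h f =>
    constructor
    · intro hx
      have hf : ∀ᶠ n in (Filter.hyperfilter ℕ : Filter ℕ), f n ∈ (· + k) '' B := hx
      have hf' : ∀ᶠ n in (Filter.hyperfilter ℕ : Filter ℕ), k ≤ f n ∧ f n - k ∈ B := by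
        refine hf.mono ?_
        rintro n ⟨b, hb, hbk⟩
        simp only at hbk
        have h1 : k ≤ f n := by omega
        have h2 : f n - k = b := by omega
        exact ⟨h1, by rw [h2]; exact hb⟩
      refine ⟨↑(fun n => f n - k), (memF_coe _ _).2 (hf'.mono fun n hn => hn.2), ?_⟩
      show ((fun n => f n - k + k : ℕ → ℕ) : SN) = ↑f
      exact Filter.Germ.coe_eq.2 (hf'.mono fun n hn => Nat.sub_add_cancel hn.1)
    · rintro ⟨y, hy, h⟩
      exact h ▸ dir y hy

lemma starN_preimage (B : Set ℕ) (k : ℕ) :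
    starN {n : ℕ | n + k ∈ B} = {x : SN | x + (k:SN) ∈ starN B} := by
  ext x
  induction x using Filter.Germ.inductionOn with
  | h f =>
    show (∀ᶠ n in (Filter.hyperfilter ℕ : Filter ℕ), f n + k ∈ B) ↔
      memF _ (↑(fun n => f n + k))
    exact (memF_coe _ _).symm

end StarN

section Main
variable {k : ℕ}

lemma sn_inf_sub {y z : SN} (h : InfInterval y z) :
    InfInterval (y - (k:SN)) (z - (k:SN)) := by
  intro n
  have hkz : (k:SN) ≤ z := le_trans le_add_self (h k).le
  have h1 : (y - (k:SN) + (n:SN)) + (k:SN) ≤ (y + (n:SN)) + (k:SN) :=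
    add_le_add_left (add_le_add_left (sn_sub_le y) _) _
  have h2 : (y + (n:SN)) + (k:SN) < z := by
    have := h (n + k)
    rw [Nat.cast_add] at this
    rwa [← add_assoc] at this
  have h3 : (y - (k:SN) + (n:SN)) + (k:SN) < (z - (k:SN)) + (k:SN) := by
    rw [sn_sub_add hkz]
    exact lt_of_le_of_lt h1 h2
  exact lt_of_add_lt_add_right h3

lemma IMOn_image (A : Set SN) (hA : ∀ y z : SN, InfInterval y z → IMOn A y z) (k : ℕ) :
    ∀ y z : SN, InfInterval y z → IMOn ((· + (k:SN)) '' A) y z := by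
  intro y z hyz ε hε
  set S := (· + (k:SN)) '' A with hSdef
  obtain ⟨δ, hδ, hkey⟩ := hA (y - (k:SN)) (z - (k:SN)) (sn_inf_sub hyz) ε hε
  have hSk : ∀ x ∈ S, (k:SN) ≤ x := by
    rintro x ⟨a, -, rfl⟩
    exact le_add_self
  refine ⟨δ/2, by linarith, ?_⟩
  have main : ∀ c₁ d₁ : SN, y ≤ c₁ → c₁ ≤ d₁ → d₁ ≤ z → InfInterval c₁ d₁ →
      (k:SN) ≤ c₁ → gap S c₁ d₁ ≤ δ → 1 - ε ≤ lam S c₁ d₁ := by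
    intro c₁ d₁ h1 h2 h3 h4 h5 h6
    have hc₀ : c₁ - (k:SN) + (k:SN) = c₁ := sn_sub_add h5
    have hd₀ : d₁ - (k:SN) + (k:SN) = d₁ := sn_sub_add (le_trans h5 h2)
    have e1 : y - (k:SN) ≤ c₁ - (k:SN) := sn_sub_le_sub h1
    have e2 : c₁ - (k:SN) ≤ d₁ - (k:SN) := sn_sub_le_sub h2
    have e3 : d₁ - (k:SN) ≤ z - (k:SN) := sn_sub_le_sub h3
    have e4 : InfInterval (c₁ - (k:SN)) (d₁ - (k:SN)) := by
      intro n
      have h7 : (c₁ - (k:SN) + (n:SN)) + (k:SN) < (d₁ - (k:SN)) + (k:SN) := by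
        rw [hd₀]
        calc (c₁ - (k:SN) + (n:SN)) + (k:SN)
            = (c₁ - (k:SN) + (k:SN)) + (n:SN) := add_right_comm _ _ _
          _ = c₁ + (n:SN) := by rw [hc₀]
          _ < d₁ := h4 n
      exact lt_of_add_lt_add_right h7
    have egap : gap A (c₁ - (k:SN)) (d₁ - (k:SN)) = gap S c₁ d₁ := by
      conv_rhs => rw [← hc₀, ← hd₀]
      exact (gap_shift A _ _ k).symm
    have elam : lam A (c₁ - (k:SN)) (d₁ - (k:SN)) = lam S c₁ d₁ := by
      conv_rhs => rw [← hc₀, ← hd₀]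
      exact (lam_shift A _ _ k).symm
    have h8 := hkey _ _ e1 e2 e3 e4 (by rw [egap]; exact h6)
    linarith [h8, elam.ge, elam.le]
  intro c' d' hyc hcd hdz hinf hgap
  by_cases hC : (k:SN) ≤ c'
  · exact main c' d' hyc hcd hdz hinf hC (by linarith)
  · have hcC : c' ≤ (k:SN) := le_of_not_ge hC
    have hCd : (k:SN) ≤ d' := le_trans le_add_self (hinf k).le
    have hCc : (k:SN) ≤ c' + (k:SN) := le_add_self
    have hinf2 : InfInterval (k:SN) d' := by
      intro n
      have h9 := hinf (k + n)
      rw [Nat.cast_add] at h9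
      calc (k:SN) + (n:SN) ≤ c' + ((k:SN) + (n:SN)) := le_add_self
        _ < d' := h9
    have hg2 : gap S (k:SN) d' ≤ δ := by
      have := gap_le_boundary (S := S) (k := k) hinf hcC hCc hCd
      linarith
    have h3 := main (k:SN) d' (le_trans hyc hcC) hCd hdz hinf2 le_rfl hg2
    have h4 : lam S c' d' = lam S (k:SN) d' := lam_eq_boundary hinf hcC hCc hSk
    linarith

lemma shift_congr (A : Set SN) (k : ℕ) (c₁ d₁ : SN) :
    ∀ x ∈ Set.Icc (c₁ + (k:SN)) (d₁ + (k:SN)),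
      (x ∈ (· + (k:SN)) '' {x : SN | x + (k:SN) ∈ A} ↔ x ∈ A) := by
  intro x hx
  have hCx : (k:SN) ≤ x := le_trans le_add_self hx.1
  constructor
  · rintro ⟨s, hs, rfl⟩
    exact hs
  · intro hxA
    refine ⟨x - (k:SN), ?_, sn_sub_add hCx⟩
    show x - (k:SN) + (k:SN) ∈ A
    rw [sn_sub_add hCx]
    exact hxA

lemma IMOn_preimage (A : Set SN) (hA : ∀ y z : SN, InfInterval y z → IMOn A y z) (k : ℕ) :
    ∀ y z : SN, InfInterval y z → IMOn {x : SN | x + (k:SN) ∈ A} y z := by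
  intro y z hyz ε hε
  set S := {x : SN | x + (k:SN) ∈ A} with hSdef
  obtain ⟨δ, hδ, hkey⟩ := hA (y + (k:SN)) (z + (k:SN)) (inf_shift hyz) ε hε
  refine ⟨δ, hδ, ?_⟩
  intro c₁ d₁ h1 h2 h3 h4 hgap
  have hgap' : gap S c₁ d₁ = gap A (c₁ + (k:SN)) (d₁ + (k:SN)) := by
    rw [← gap_shift S c₁ d₁ k]
    exact gap_congr (shift_congr A k c₁ d₁)
  have hlam' : lam S c₁ d₁ = lam A (c₁ + (k:SN)) (d₁ + (k:SN)) := by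
    rw [← lam_shift S c₁ d₁ k]
    exact lam_congr (shift_congr A k c₁ d₁)
  have h5 := hkey _ _ (add_le_add_left h1 _) (add_le_add_left h2 _) (add_le_add_left h3 _)
    (inf_shift h4) (by rw [← hgap']; exact hgap)
  rw [hlam']
  linarith

end Main

theorem stmt_14 (A : Set ℕ) (hA : SupraSIM A) (i : ℕ) :
    SupraSIM ((· + i) '' A) ∧ SupraSIM {n : ℕ | n + i ∈ A} := by
  obtain ⟨B, hBA, hB1, hB2⟩ := hA
  constructor
  · refine ⟨(· + i) '' B, Set.image_mono hBA, ?_, ?_⟩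
    · rw [starN_image]
      exact IMOn_image (starN B) hB1 i
    · obtain ⟨y, z, hyz, hIM, hlam⟩ := hB2
      refine ⟨y + (i:SN), z + (i:SN), inf_shift hyz, ?_, ?_⟩
      · rw [starN_image]
        exact IMOn_image (starN B) hB1 i _ _ (inf_shift hyz)
      · rw [starN_image, lam_shift]
        exact hlam
  · refine ⟨{n | n + i ∈ B}, fun n hn => hBA hn, ?_, ?_⟩
    · rw [starN_preimage]
      exact IMOn_preimage (starN B) hB1 i
    · obtain ⟨y, z, hyz, hIM, hlam⟩ := hB2
      have hkz : (i:SN) ≤ z := le_trans le_add_self (hyz i).le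
      have hz : (z - (i:SN)) + (i:SN) = z := sn_sub_add hkz
      have hyzC : InfInterval y (z - (i:SN)) := by
        intro n
        have h2 : (y + (n:SN)) + (i:SN) < z := by
          have := hyz (n + i)
          rw [Nat.cast_add] at this
          rwa [← add_assoc] at this
        have h3 : (y + (n:SN)) + (i:SN) < (z - (i:SN)) + (i:SN) := by
          rw [hz]; exact h2
        exact lt_of_add_lt_add_right h3
      refine ⟨y, z - (i:SN), hyzC, ?_, ?_⟩
      · rw [starN_preimage]
        exact IMOn_preimage (starN B) hB1 i _ _ hyzC
      · rw [starN_preimage]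
        have e1 : lam {x : SN | x + (i:SN) ∈ starN B} y (z - (i:SN))
            = lam (starN B) (y + (i:SN)) z := by
          have h5 := (lam_shift {x : SN | x + (i:SN) ∈ starN B} y (z - (i:SN)) i).symm
          rw [h5, lam_congr (shift_congr (starN B) i y (z - (i:SN))), hz]
        have hy'z : InfInterval (y + (i:SN)) z := by
          intro n
          have := hyz (i + n)
          rw [Nat.cast_add] at this
          rwa [← add_assoc] at this
        have e2 : lam (starN B) y z ≤ lam (starN B) (y + (i:SN)) z :=
          lam_le_boundary (k := i) hyz le_self_add le_rfl (hyz i).le hy'z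
        rw [e1]
        linarith
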